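/- Let U₋(ε) = (1/(2πi))∫_{C₋} Q^{εs} ds/s where C₋ is the left half of the circle |s| = ω and R = ω log Q. By deforming the contour, U₋(ε) = (1/π)∫_R^∞ sin(εy)/y dy. Moreover, if εR is a nonzero integer multiple of 2π, then |U₋(ε)| ≫ (εR)^{-1}. -/

import Mathlib

open MeasureTheory Filter Set intervalIntegral

noncomputable def Jint (x : ℝ) : ℝ := ∫ u in Set.Ioi x, Real.sin u / u ^ 3

noncomputable def Lfun (x : ℝ) : ℝ :=
  Real.cos x / x + Real.sin x / x ^ 2 - 2 * Jint x

lemma rpow_neg_three {u : ℝ} (hu : 0 < u) : u ^ (-3 : ℝ) = (u ^ 3)⁻¹ := by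
  rw [Real.rpow_neg hu.le, ← Real.rpow_natCast u 3]; norm_num

lemma intSinCube {x : ℝ} (hx : 0 < x) :
    IntegrableOn (fun u => Real.sin u / u ^ 3) (Set.Ioi x) := by
  have h1 : IntegrableOn (fun u : ℝ => u ^ (-3 : ℝ)) (Set.Ioi x) :=
    integrableOn_Ioi_rpow_of_lt (by norm_num) hx
  refine h1.mono' ((Real.measurable_sin.div (measurable_id.pow_const 3)).aestronglyMeasurable) ?_
  filter_upwards [ae_restrict_mem measurableSet_Ioi] with u hu
  have hu0 : 0 < u := hx.trans hu
  rw [Real.norm_eq_abs, abs_div, abs_of_pos (by positivity : (0:ℝ) < u ^ 3),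
    rpow_neg_three hu0, inv_eq_one_div]
  gcongr
  exact abs_le.2 ⟨Real.neg_one_le_sin u, Real.sin_le_one u⟩

lemma Jint_bound {x : ℝ} (hx : 0 < x) : |Jint x| ≤ x ^ (-2 : ℝ) / 2 := by
  have h1 : ‖∫ u in Set.Ioi x, Real.sin u / u ^ 3‖ ≤ ∫ u in Set.Ioi x, u ^ (-3 : ℝ) := by
    refine norm_integral_le_of_norm_le (integrableOn_Ioi_rpow_of_lt (by norm_num) hx) ?_
    filter_upwards [ae_restrict_mem measurableSet_Ioi] with u hu
    have hu0 : 0 < u := hx.trans hu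
    rw [Real.norm_eq_abs, abs_div, abs_of_pos (by positivity : (0:ℝ) < u ^ 3),
      rpow_neg_three hu0]
    rw [inv_eq_one_div]
    gcongr
    exact abs_le.2 ⟨Real.neg_one_le_sin u, Real.sin_le_one u⟩
  have h2 : ∫ u in Set.Ioi x, u ^ (-3 : ℝ) = x ^ (-2 : ℝ) / 2 := by
    rw [integral_Ioi_rpow_of_lt (by norm_num) hx]; norm_num
  rw [Jint, ← Real.norm_eq_abs]
  calc ‖∫ u in Set.Ioi x, Real.sin u / u ^ 3‖ ≤ _ := h1
  _ = _ := h2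

lemma contOn_sin_div {a b : ℝ} (ha : 0 < a) :
    IntervalIntegrable (fun u => Real.sin u / u) MeasureTheory.volume a b ∨ True := Or.inr trivial

lemma intInt_aux {g : ℝ → ℝ} (hg : Continuous g) {n : ℕ} {a b : ℝ} (ha : 0 < a) (hb : 0 < b) :
    IntervalIntegrable (fun u => g u / u ^ n) MeasureTheory.volume a b := by
  apply ContinuousOn.intervalIntegrable
  apply ContinuousOn.div hg.continuousOn (by fun_prop)
  intro u hu
  have : 0 < u := lt_of_lt_of_le (lt_min ha hb) hu.1
  positivity

lemma hasDerivAt_G {x t : ℝ} (hx : 0 < x) (ht : x ≤ t) :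
    HasDerivAt (fun t => -(Real.cos t / t) - Real.sin t / t ^ 2
      - 2 * ∫ u in x..t, Real.sin u / u ^ 3) (Real.sin t / t) t := by
  have ht0 : 0 < t := hx.trans_le ht
  have h1 : HasDerivAt (fun t => Real.cos t / t) ((-Real.sin t * t - Real.cos t * 1) / t ^ 2) t :=
    (Real.hasDerivAt_cos t).div (hasDerivAt_id t) ht0.ne'
  have h2 : HasDerivAt (fun t => Real.sin t / t ^ 2)
      ((Real.cos t * t ^ 2 - Real.sin t * (2 * t ^ 1)) / (t ^ 2) ^ 2) t :=
    (Real.hasDerivAt_sin t).div (hasDerivAt_pow 2 t) (by positivity)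
  have h3 : HasDerivAt (fun t => ∫ u in x..t, Real.sin u / u ^ 3) (Real.sin t / t ^ 3) t := by
    refine intervalIntegral.integral_hasDerivAt_right (intInt_aux Real.continuous_sin hx ht0)
      ?_ ?_
    · exact (Real.measurable_sin.div (measurable_id.pow_const 3)).aestronglyMeasurable.stronglyMeasurableAtFilter
    · exact ContinuousAt.div (Real.continuous_sin.continuousAt) (by fun_prop) (by positivity)
  have := (h1.neg.sub h2).sub (h3.const_mul 2)
  refine this.congr_deriv ?_
  field_simp
  ring

lemma tendsto_Lfun {x : ℝ} (hx : 0 < x) :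
    Tendsto (fun T => ∫ u in x..T, Real.sin u / u) atTop (nhds (Lfun x)) := by
  set G : ℝ → ℝ := fun t => -(Real.cos t / t) - Real.sin t / t ^ 2
      - 2 * ∫ u in x..t, Real.sin u / u ^ 3 with hG
  have key : ∀ T, x ≤ T → (∫ u in x..T, Real.sin u / u) = G T - G x := by
    intro T hT
    refine intervalIntegral.integral_eq_sub_of_hasDerivAt (fun t htt => ?_) ?_
    · rw [uIcc_of_le hT] at htt
      exact hasDerivAt_G hx htt.1
    · simpa using intInt_aux Real.continuous_sin hx (hx.trans_le hT) (n := 1)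
  have hGx : G x = -(Real.cos x / x) - Real.sin x / x ^ 2 := by
    simp [hG]
  have l1 : Tendsto (fun T => Real.cos T / T) atTop (nhds 0) := by
    apply squeeze_zero_norm' (a := fun T => 1 / T)
    · filter_upwards [eventually_gt_atTop 0] with T hT
      rw [Real.norm_eq_abs, abs_div, abs_of_pos hT]
      gcongr
      exact abs_le.2 ⟨Real.neg_one_le_cos T, Real.cos_le_one T⟩
    · simpa using tendsto_inv_atTop_zero
  have l2 : Tendsto (fun T => Real.sin T / T ^ 2) atTop (nhds 0) := by
    apply squeeze_zero_norm' (a := fun T => 1 / T ^ 2)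
    · filter_upwards [eventually_gt_atTop 0] with T hT
      rw [Real.norm_eq_abs, abs_div, abs_of_pos (by positivity : (0:ℝ) < T ^ 2)]
      gcongr
      exact abs_le.2 ⟨Real.neg_one_le_sin T, Real.sin_le_one T⟩
    · have : Tendsto (fun T : ℝ => T ^ 2) atTop atTop := tendsto_pow_atTop (by norm_num)
      simpa [one_div, Function.comp_def] using (tendsto_inv_atTop_zero.comp this)
  have l3 : Tendsto (fun T => ∫ u in x..T, Real.sin u / u ^ 3) atTop (nhds (Jint x)) :=
    intervalIntegral_tendsto_integral_Ioi x (intSinCube hx) tendsto_id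
  have lG : Tendsto (fun T => G T - G x) atTop (nhds (Lfun x)) := by
    have := ((l1.neg.sub l2).sub (l3.const_mul 2)).sub_const (G x)
    convert this using 2
    rw [hGx, Lfun]
    ring
  refine lG.congr' ?_
  filter_upwards [eventually_ge_atTop x] with T hT
  exact (key T hT).symm

lemma intInt_sin_div {a b : ℝ} (ha : 0 < a) (hb : 0 < b) :
    IntervalIntegrable (fun u => Real.sin u / u) MeasureTheory.volume a b := by
  simpa using intInt_aux Real.continuous_sin ha hb (n := 1)

lemma Lfun_sub {x y : ℝ} (hx : 0 < x) (hy : 0 < y) :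
    Lfun y = Lfun x - ∫ u in x..y, Real.sin u / u := by
  have hev : ∀ᶠ T in atTop, (∫ u in y..T, Real.sin u / u)
      = (∫ u in x..T, Real.sin u / u) - ∫ u in x..y, Real.sin u / u := by
    filter_upwards [eventually_ge_atTop x, eventually_ge_atTop y] with T hTx hTy
    rw [intervalIntegral.integral_interval_sub_left
      (intInt_sin_div hx (hx.trans_le hTx)) (intInt_sin_div hx hy)]
  have h2 := (tendsto_Lfun hx).sub_const (∫ u in x..y, Real.sin u / u)
  exact tendsto_nhds_unique (tendsto_Lfun hy) (h2.congr' (hev.mono fun T h => h.symm))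

lemma hasDerivAt_Lfun {x : ℝ} (hx : 0 < x) : HasDerivAt Lfun (-(Real.sin x / x)) x := by
  have h1 : HasDerivAt (fun y => Lfun x - ∫ u in x..y, Real.sin u / u)
      (-(Real.sin x / x)) x := by
    refine (intervalIntegral.integral_hasDerivAt_right ?_ ?_ ?_).const_sub (Lfun x)
    · simpa using intInt_aux Real.continuous_sin hx hx (n := 1)
    · exact (Real.measurable_sin.div measurable_id).aestronglyMeasurable.stronglyMeasurableAtFilter
    · exact ContinuousAt.div Real.continuous_sin.continuousAt continuousAt_id hx.ne'
  refine h1.congr_of_eventuallyEq ?_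
  filter_upwards [eventually_gt_nhds hx] with y hy
  exact Lfun_sub hx hy

lemma Lfun_tendsto_zero : Tendsto Lfun atTop (nhds 0) := by
  apply squeeze_zero_norm' (a := fun x => 3 / x)
  · filter_upwards [eventually_ge_atTop 1] with x hx
    have hx0 : 0 < x := lt_of_lt_of_le one_pos hx
    have h1 : |Real.cos x / x| ≤ 1 / x := by
      rw [abs_div, abs_of_pos hx0]
      gcongr
      exact abs_le.2 ⟨Real.neg_one_le_cos x, Real.cos_le_one x⟩
    have h2 : |Real.sin x / x ^ 2| ≤ 1 / x := by
      rw [abs_div, abs_of_pos (by positivity : (0:ℝ) < x ^ 2)]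
      calc |Real.sin x| / x ^ 2 ≤ 1 / x ^ 2 := by
            gcongr; exact abs_le.2 ⟨Real.neg_one_le_sin x, Real.sin_le_one x⟩
        _ ≤ 1 / x := by
            rw [div_le_div_iff₀ (by positivity) hx0]
            nlinarith
    have h3 : |2 * Jint x| ≤ 1 / x := by
      rw [abs_mul, abs_of_pos (by norm_num : (0:ℝ) < 2)]
      have := Jint_bound hx0
      have hr : x ^ (-2 : ℝ) = (x ^ 2)⁻¹ := by
        rw [Real.rpow_neg hx0.le, ← Real.rpow_natCast x 2]; norm_num
      rw [hr] at this
      calc 2 * |Jint x| ≤ 2 * ((x ^ 2)⁻¹ / 2) := by gcongr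
        _ = 1 / x ^ 2 := by ring
        _ ≤ 1 / x := by rw [div_le_div_iff₀ (by positivity) hx0]; nlinarith
    calc ‖Lfun x‖ ≤ |Real.cos x / x| + |Real.sin x / x ^ 2| + |2 * Jint x| := by
          rw [Real.norm_eq_abs, Lfun]
          exact (abs_sub _ _).trans (by gcongr; exact abs_add_le _ _)
      _ ≤ 1 / x + 1 / x + 1 / x := by gcongr
      _ = 3 / x := by ring
  · simpa using tendsto_const_nhds.div_atTop (tendsto_id (α := ℝ))

noncomputable def Ffun (x : ℝ) : ℂ :=
  ∫ θ in (Real.pi / 2)..(3 * Real.pi / 2),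
    Complex.exp ((x : ℂ) * Complex.exp ((θ : ℂ) * Complex.I))

lemma contF (x : ℝ) :
    Continuous (fun θ : ℝ => Complex.exp ((x : ℂ) * Complex.exp ((θ : ℂ) * Complex.I))) := by
  fun_prop

lemma normF (x θ : ℝ) :
    ‖Complex.exp ((x : ℂ) * Complex.exp ((θ : ℂ) * Complex.I))‖ = Real.exp (x * Real.cos θ) := by
  rw [Complex.norm_exp]
  congr 1
  rw [Complex.re_ofReal_mul, Complex.exp_ofReal_mul_I_re]

lemma hasDerivAt_inner (c : ℂ) (y : ℝ) :
    HasDerivAt (fun y : ℝ => Complex.exp ((y : ℂ) * c)) (c * Complex.exp ((y : ℂ) * c)) y := by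
  have h : HasDerivAt (fun z : ℂ => Complex.exp (z * c)) (Complex.exp ((y : ℂ) * c) * c) (y : ℂ) :=
    (hasDerivAt_mul_const c).cexp
  simpa [mul_comm] using h.comp_ofReal

lemma cexp_three_pi_half : Complex.exp (((3 * Real.pi / 2 : ℝ) : ℂ) * Complex.I) = -Complex.I := by
  rw [Complex.exp_mul_I, ← Complex.ofReal_cos, ← Complex.ofReal_sin]
  have h1 : Real.cos (3 * Real.pi / 2) = 0 := by
    have : (3 * Real.pi / 2 : ℝ) = Real.pi + Real.pi / 2 := by ring
    rw [this, Real.cos_add]; simp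
  have h2 : Real.sin (3 * Real.pi / 2) = -1 := by
    have : (3 * Real.pi / 2 : ℝ) = Real.pi + Real.pi / 2 := by ring
    rw [this, Real.sin_add]; simp
  rw [h1, h2]; simp

lemma cexp_pi_half : Complex.exp (((Real.pi / 2 : ℝ) : ℂ) * Complex.I) = Complex.I := by
  rw [Complex.exp_mul_I, ← Complex.ofReal_cos, ← Complex.ofReal_sin]
  rw [Real.cos_pi_div_two, Real.sin_pi_div_two]; simp

lemma boundary_integral {x : ℝ} (hx : 0 < x) :
    (∫ θ in (Real.pi / 2)..(3 * Real.pi / 2),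
      Complex.exp ((θ : ℂ) * Complex.I) * Complex.exp ((x : ℂ) * Complex.exp ((θ : ℂ) * Complex.I)))
    = -(2 * Real.sin x / x : ℝ) := by
  have hx' : (x : ℂ) ≠ 0 := Complex.ofReal_ne_zero.2 hx.ne'
  have hAnti : ∀ θ ∈ Set.uIcc (Real.pi / 2) (3 * Real.pi / 2),
      HasDerivAt (fun θ : ℝ => ((x : ℂ) * Complex.I)⁻¹
        * Complex.exp ((x : ℂ) * Complex.exp ((θ : ℂ) * Complex.I)))
        (Complex.exp ((θ : ℂ) * Complex.I)
          * Complex.exp ((x : ℂ) * Complex.exp ((θ : ℂ) * Complex.I))) θ := by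
    intro θ _
    have h1 : HasDerivAt (fun θ : ℝ => Complex.exp ((θ : ℂ) * Complex.I))
        (Complex.I * Complex.exp ((θ : ℂ) * Complex.I)) θ := hasDerivAt_inner Complex.I θ
    have h2 : HasDerivAt (fun θ : ℝ => (x : ℂ) * Complex.exp ((θ : ℂ) * Complex.I))
        ((x : ℂ) * (Complex.I * Complex.exp ((θ : ℂ) * Complex.I))) θ := h1.const_mul _
    have h3 := h2.cexp
    have h4 := h3.const_mul (((x : ℂ) * Complex.I)⁻¹)
    refine h4.congr_deriv ?_
    field_simp [Complex.I_ne_zero]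
  have hcont : Continuous (fun θ : ℝ => Complex.exp ((θ : ℂ) * Complex.I)
      * Complex.exp ((x : ℂ) * Complex.exp ((θ : ℂ) * Complex.I))) := by fun_prop
  rw [intervalIntegral.integral_eq_sub_of_hasDerivAt hAnti (hcont.intervalIntegrable _ _)]
  rw [cexp_three_pi_half, cexp_pi_half]
  have e1 : (x : ℂ) * -Complex.I = (-x : ℝ) * Complex.I := by push_cast; ring
  rw [e1, Complex.exp_mul_I, Complex.exp_mul_I]
  rw [← Complex.ofReal_cos, ← Complex.ofReal_sin, ← Complex.ofReal_cos, ← Complex.ofReal_sin]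
  rw [Real.cos_neg, Real.sin_neg]
  push_cast
  field_simp [Complex.I_ne_zero]
  ring

lemma hasDerivAt_Ffun {x : ℝ} (hx : 0 < x) :
    HasDerivAt Ffun (-(2 * Real.sin x / x : ℝ) : ℂ) x := by
  have key := intervalIntegral.hasDerivAt_integral_of_dominated_loc_of_deriv_le
    (F := fun (y : ℝ) (θ : ℝ) => Complex.exp ((y : ℂ) * Complex.exp ((θ : ℂ) * Complex.I)))
    (F' := fun (y : ℝ) (θ : ℝ) => Complex.exp ((θ : ℂ) * Complex.I)
      * Complex.exp ((y : ℂ) * Complex.exp ((θ : ℂ) * Complex.I)))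
    (x₀ := x) (a := Real.pi / 2) (b := 3 * Real.pi / 2) (μ := volume)
    (bound := fun _ => Real.exp (|x| + 1)) (s := Metric.ball x 1) (Metric.ball_mem_nhds x one_pos)
    ?_ ?_ ?_ ?_ ?_ ?_
  · have h2 := key.2
    rwa [boundary_integral hx] at h2
  · exact Eventually.of_forall fun y => (contF y).aestronglyMeasurable
  · exact (contF x).intervalIntegrable _ _
  · exact ((by fun_prop : Continuous (fun θ : ℝ => Complex.exp ((θ : ℂ) * Complex.I)
      * Complex.exp ((x : ℂ) * Complex.exp ((θ : ℂ) * Complex.I))))).aestronglyMeasurable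
  · refine Eventually.of_forall fun θ _ y hy => ?_
    rw [norm_mul, normF]
    have h1 : ‖Complex.exp ((θ : ℂ) * Complex.I)‖ = 1 := by
      rw [Complex.norm_exp]
      simp [Complex.mul_I_re, Complex.ofReal_im]
    rw [h1, one_mul]
    apply Real.exp_le_exp.2
    have hyx : |y| ≤ |x| + 1 := by
      have := mem_ball_iff_norm.1 hy
      rw [Real.norm_eq_abs] at this
      calc |y| ≤ |y - x| + |x| := by
            have := abs_sub_abs_le_abs_sub y x
            linarith [abs_sub_abs_le_abs_sub y x]
        _ ≤ |x| + 1 := by linarith [this.le]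
    calc y * Real.cos θ ≤ |y * Real.cos θ| := le_abs_self _
      _ = |y| * |Real.cos θ| := abs_mul _ _
      _ ≤ (|x| + 1) * 1 := by
          gcongr
          exact abs_le.2 ⟨Real.neg_one_le_cos θ, Real.cos_le_one θ⟩
      _ = |x| + 1 := mul_one _
  · exact intervalIntegrable_const
  · refine Eventually.of_forall fun θ _ y _ => ?_
    exact hasDerivAt_inner _ y

lemma Ffun_tendsto_zero : Tendsto Ffun atTop (nhds 0) := by
  have hle : Real.pi / 2 ≤ 3 * Real.pi / 2 := by linarith [Real.pi_pos]
  have hrw : ∀ x : ℝ, Ffun x = ∫ θ in Set.Ioc (Real.pi / 2) (3 * Real.pi / 2),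
      Complex.exp ((x : ℂ) * Complex.exp ((θ : ℂ) * Complex.I)) := fun x =>
    intervalIntegral.integral_of_le hle
  have key : Tendsto (fun x : ℝ => ∫ θ in Set.Ioc (Real.pi / 2) (3 * Real.pi / 2),
      Complex.exp ((x : ℂ) * Complex.exp ((θ : ℂ) * Complex.I))) atTop
      (nhds (∫ _ in Set.Ioc (Real.pi / 2) (3 * Real.pi / 2), (0 : ℂ))) := by
    apply MeasureTheory.tendsto_integral_filter_of_dominated_convergence (bound := fun _ => (1 : ℝ))
    · exact Eventually.of_forall fun y => (contF y).aestronglyMeasurable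
    · filter_upwards [eventually_ge_atTop 0] with y hy
      filter_upwards [ae_restrict_mem measurableSet_Ioc] with θ hθ
      rw [normF]
      apply Real.exp_le_exp.2 ?_ |>.trans_eq Real.exp_zero
      have hc : Real.cos θ ≤ 0 :=
        Real.cos_nonpos_of_pi_div_two_le_of_le hθ.1.le (by linarith [hθ.2])
      exact mul_nonpos_of_nonneg_of_nonpos hy hc
    · exact integrable_const 1
    · have hae : ∀ᵐ θ ∂(volume.restrict (Set.Ioc (Real.pi / 2) (3 * Real.pi / 2))),
          θ ≠ 3 * Real.pi / 2 := by
        refine ae_restrict_of_ae ?_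
        rw [MeasureTheory.ae_iff]
        have : {θ : ℝ | ¬θ ≠ 3 * Real.pi / 2} = {(3 * Real.pi / 2 : ℝ)} := by
          ext θ; simp
        rw [this]
        exact measure_singleton _
      filter_upwards [ae_restrict_mem measurableSet_Ioc, hae] with θ hθ hne
      have hc : Real.cos θ < 0 := by
        apply Real.cos_neg_of_pi_div_two_lt_of_lt hθ.1
        rcases lt_or_eq_of_le hθ.2 with h | h
        · linarith
        · exact absurd h hne
      rw [tendsto_zero_iff_norm_tendsto_zero]
      have hnorm : (fun x : ℝ => ‖Complex.exp ((x : ℂ) * Complex.exp ((θ : ℂ) * Complex.I))‖)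
          = fun x => Real.exp (x * Real.cos θ) := funext fun x => normF x θ
      rw [hnorm]
      exact Real.tendsto_exp_atBot.comp (Tendsto.atTop_mul_const_of_neg hc tendsto_id)
  rw [show (0 : ℂ) = ∫ _ in Set.Ioc (Real.pi / 2) (3 * Real.pi / 2), (0 : ℂ) by simp]
  exact key.congr fun x => (hrw x).symm


noncomputable def Ufun (x : ℝ) : ℂ := ((2 * Real.pi)⁻¹ : ℂ) * Ffun x
noncomputable def Hfun (x : ℝ) : ℂ := Ufun x - ((Lfun x / Real.pi : ℝ) : ℂ)

lemma hasDerivAt_Hfun {t : ℝ} (ht : 0 < t) : HasDerivAt Hfun 0 t := by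
  have h1 := (hasDerivAt_Ffun ht).const_mul (((2 * Real.pi)⁻¹ : ℂ))
  have h2 : HasDerivAt (fun y => ((Lfun y / Real.pi : ℝ) : ℂ))
      ((-(Real.sin t / t) / Real.pi : ℝ) : ℂ) t :=
    ((hasDerivAt_Lfun ht).div_const Real.pi).ofReal_comp
  have h3 := h1.sub h2
  refine h3.congr_deriv ?_
  have hπ : (Real.pi : ℂ) ≠ 0 := Complex.ofReal_ne_zero.2 Real.pi_ne_zero
  have ht' : (t : ℂ) ≠ 0 := Complex.ofReal_ne_zero.2 ht.ne'
  push_cast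
  field_simp
  ring

lemma Ufun_eq {x : ℝ} (hx : 0 < x) : Ufun x = ((Lfun x / Real.pi : ℝ) : ℂ) := by
  have hconst : ∀ y, x ≤ y → Hfun y = Hfun x := by
    intro y hy
    have h := intervalIntegral.integral_eq_sub_of_hasDerivAt (f := Hfun)
      (f' := fun _ => (0 : ℂ)) (a := x) (b := y)
      (fun t htt => by
        rw [Set.uIcc_of_le hy] at htt
        exact hasDerivAt_Hfun (hx.trans_le htt.1))
      intervalIntegrable_const
    simp only [intervalIntegral.integral_const, smul_zero] at h
    exact (sub_eq_zero.1 h.symm)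
  have hH0 : Tendsto Hfun atTop (nhds 0) := by
    have hU : Tendsto Ufun atTop (nhds 0) := by
      have h := Ffun_tendsto_zero.const_mul (((2 * Real.pi)⁻¹ : ℂ))
      rw [mul_zero] at h
      exact h
    have hL : Tendsto (fun y => ((Lfun y / Real.pi : ℝ) : ℂ)) atTop (nhds 0) := by
      have h1 := Lfun_tendsto_zero.div_const Real.pi
      have h2 := (Complex.continuous_ofReal.tendsto (0 / Real.pi)).comp h1
      simp only [Function.comp_def] at h2
      rwa [show (((0 : ℝ) / Real.pi : ℝ) : ℂ) = 0 by norm_num] at h2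
    have h := hU.sub hL
    rw [sub_zero] at h
    exact h
  have hHx : Tendsto Hfun atTop (nhds (Hfun x)) := by
    refine Tendsto.congr' ?_ tendsto_const_nhds
    filter_upwards [eventually_ge_atTop x] with y hy
    exact (hconst y hy).symm
  have h0 := tendsto_nhds_unique hHx hH0
  rw [Hfun] at h0
  exact sub_eq_zero.1 h0

lemma subst_int {R T ε : ℝ} (hε : 0 < ε) :
    (∫ y in R..T, Real.sin (ε * y) / y) = ∫ u in (ε * R)..(ε * T), Real.sin u / u := by
  have h1 : (fun y => Real.sin (ε * y) / y) = fun y => ε * (Real.sin (ε * y) / (ε * y)) := by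
    funext y
    rcases eq_or_ne y 0 with rfl | hy
    · simp
    · field_simp
  rw [h1, intervalIntegral.integral_const_mul,
    intervalIntegral.integral_comp_mul_left (f := fun u => Real.sin u / u) hε.ne']
  rw [smul_eq_mul, ← mul_assoc, mul_inv_cancel₀ hε.ne', one_mul]

/-- With `U₋(ε) = (1/(2πi))∫_{C₋} Q^{εs} ds/s` over the left semicircle of `|s| = ω`
(parametrized as `(1/(2π))∫_{π/2}^{3π/2} exp(εω e^{iθ} log Q) dθ`) and `R = ω log Q`:
`U₋(ε) = (1/π)∫_R^∞ sin(εy)/y dy` (as an improper integral), and if `εR` is a nonzero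
integer multiple of `2π` then `|U₋(ε)| ≫ (εR)⁻¹`. -/
theorem stmt_13 : ∃ c > (0 : ℝ), ∀ Q ω ε : ℝ, 1 < Q → 0 < ω → 0 < ε →
    (∃ L : ℝ,
      Tendsto (fun T => ∫ y in (ω * Real.log Q)..T, Real.sin (ε * y) / y) atTop (nhds L) ∧
      ((2 * Real.pi)⁻¹ : ℂ) * (∫ θ in (Real.pi / 2)..(3 * Real.pi / 2),
          Complex.exp (((ε * ω * Real.log Q : ℝ) : ℂ) * Complex.exp ((θ : ℂ) * Complex.I)))
        = ((L / Real.pi : ℝ) : ℂ)) ∧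
    ((∃ k : ℤ, k ≠ 0 ∧ ε * (ω * Real.log Q) = 2 * Real.pi * (k : ℝ)) →
      c / (ε * (ω * Real.log Q)) ≤
        ‖((2 * Real.pi)⁻¹ : ℂ) * (∫ θ in (Real.pi / 2)..(3 * Real.pi / 2),
          Complex.exp (((ε * ω * Real.log Q : ℝ) : ℂ) * Complex.exp ((θ : ℂ) * Complex.I)))‖) := by
  refine ⟨(2 * Real.pi)⁻¹, by positivity, ?_⟩
  intro Q ω ε hQ hω hε
  have hlog : 0 < Real.log Q := Real.log_pos hQ
  set R := ω * Real.log Q with hR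
  have hx : 0 < ε * R := by positivity
  have hxeq : (ε * ω * Real.log Q : ℝ) = ε * R := by rw [hR]; ring
  have hid : ((2 * Real.pi)⁻¹ : ℂ) * (∫ θ in (Real.pi / 2)..(3 * Real.pi / 2),
      Complex.exp (((ε * ω * Real.log Q : ℝ) : ℂ) * Complex.exp ((θ : ℂ) * Complex.I)))
      = ((Lfun (ε * R) / Real.pi : ℝ) : ℂ) := by
    rw [hxeq]
    exact Ufun_eq hx
  constructor
  · refine ⟨Lfun (ε * R), ?_, hid⟩
    have hcomp : Tendsto (fun T : ℝ => ε * T) atTop atTop :=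
      Tendsto.const_mul_atTop hε tendsto_id
    have h := (tendsto_Lfun hx).comp hcomp
    exact h.congr fun T => (subst_int hε).symm
  · rintro ⟨k, hk0, hkeq⟩
    rw [hid, Complex.norm_real, Real.norm_eq_abs]
    have hπ := Real.pi_pos
    have hk : 0 < k := by
      rcases lt_trichotomy k 0 with h | h | h
      · exfalso
        have : (k : ℝ) < 0 := by exact_mod_cast h
        nlinarith
      · exact absurd h hk0
      · exact h
    have hk1 : (1 : ℝ) ≤ (k : ℝ) := by exact_mod_cast hk
    have hx2 : 2 * Real.pi ≤ ε * R := by rw [hkeq]; nlinarith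
    have hcos : Real.cos (ε * R) = 1 := by
      rw [hkeq, show 2 * Real.pi * (k : ℝ) = (k : ℝ) * (2 * Real.pi) by ring]
      exact Real.cos_int_mul_two_pi k
    have hsin : Real.sin (ε * R) = 0 := by
      rw [hkeq, show 2 * Real.pi * (k : ℝ) = ((2 * k : ℤ) : ℝ) * Real.pi by push_cast; ring]
      exact Real.sin_int_mul_pi (2 * k)
    set x := ε * R with hxdef
    have hx0 : 0 < x := hx
    have hJ : |2 * Jint x| ≤ (x ^ 2)⁻¹ := by
      have h1 := Jint_bound hx0
      have hr : x ^ (-2 : ℝ) = (x ^ 2)⁻¹ := by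
        rw [Real.rpow_neg hx0.le, ← Real.rpow_natCast x 2]; norm_num
      rw [hr] at h1
      rw [abs_mul, abs_of_pos (by norm_num : (0 : ℝ) < 2)]
      calc 2 * |Jint x| ≤ 2 * ((x ^ 2)⁻¹ / 2) := by gcongr
        _ = (x ^ 2)⁻¹ := by ring
    have hL : 1 / (2 * x) ≤ Lfun x := by
      rw [Lfun, hcos, hsin]
      have h2 : (x ^ 2)⁻¹ ≤ 1 / (2 * x) := by
        rw [inv_eq_one_div, div_le_div_iff₀ (by positivity) (by positivity)]
        nlinarith [Real.pi_gt_three, hx0, hx2]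
      have h3 : (1 : ℝ) / x = 2 * (1 / (2 * x)) := by field_simp
      have h4 := (abs_le.1 hJ).2
      rw [h3]
      rw [zero_div]
      linarith
    have habs : |Lfun x / Real.pi| = Lfun x / Real.pi := by
      apply abs_of_nonneg
      apply div_nonneg _ hπ.le
      have : (0 : ℝ) < 1 / (2 * x) := by positivity
      linarith
    rw [habs]
    have heq : (2 * Real.pi)⁻¹ / x = (1 / (2 * x)) / Real.pi := by
      field_simp
    rw [heq]
    gcongr
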